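/- Positive maps applied to the maximally entangled state yield entanglement witnesses (the nonnegativity half of Eq. (16) of the paper). Let ι be a nonempty finite type with d = card ι, and let Λ : Matrix ι ι ℂ →ₗ[ℂ] Matrix ι ι ℂ be a positive linear map, i.e. Λ(A) is positive semidefinite whenever A is positive semidefinite. Then for all positive semidefinite A, B ∈ Matrix ι ι ℂ, the trace Tr( ((1⊗Λ)(φ⁺)) · (A ⊗ B) ) is a nonnegative real number (explicitly it equals (1/d)·Tr(Λ(Aᵀ)·B)); consequently Re Tr( ((1⊗Λ)(φ⁺)) · σ ) ≥ 0 for every separable σ ∈ Matrix (ι×ι) (ι×ι) ℂ. -/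

import Mathlib

open Matrix Kronecker ComplexOrder

/-- The maximally entangled state `φ⁺ = |φ₊⟩⟨φ₊|` on `ℂ^d ⊗ ℂ^d`. -/
noncomputable def phiPlus (ι : Type*) [Fintype ι] [DecidableEq ι] :
    Matrix (ι × ι) (ι × ι) ℂ :=
  fun p q => if p.1 = p.2 ∧ q.1 = q.2 then (1 : ℂ) / (Fintype.card ι : ℂ) else 0

/-- The map `1 ⊗ Λ` acting blockwise on a bipartite matrix:
`((1⊗Λ)(M))_{(i,a),(j,b)} = (Λ(M^{(i,j)}))_{a b}` where `(M^{(i,j)})_{a b} = M_{(i,a),(j,b)}`. -/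
noncomputable def oneTensor {ι : Type*} [Fintype ι] [DecidableEq ι]
    (Λ : Matrix ι ι ℂ →ₗ[ℂ] Matrix ι ι ℂ) (M : Matrix (ι × ι) (ι × ι) ℂ) :
    Matrix (ι × ι) (ι × ι) ℂ :=
  fun p q => (Λ (fun a b => M (p.1, a) (q.1, b))) p.2 q.2

/-- A bipartite matrix is separable if it is a finite sum of Kronecker products of
positive semidefinite matrices. -/
def SeparableState {ι : Type*} [Fintype ι]
    (σ : Matrix (ι × ι) (ι × ι) ℂ) : Prop :=
  ∃ (n : ℕ) (A : Fin n → Matrix ι ι ℂ) (B : Fin n → Matrix ι ι ℂ),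
    (∀ k, (A k).PosSemidef) ∧ (∀ k, (B k).PosSemidef) ∧ σ = ∑ k, (A k) ⊗ₖ (B k)

lemma psd_trace_nonneg {n : Type*} [Fintype n] [DecidableEq n]
    {M : Matrix n n ℂ} (h : M.PosSemidef) : 0 ≤ M.trace := by
  exact h.trace_nonneg

open scoped MatrixOrder in
lemma psd_trace_mul_nonneg {n : Type*} [Fintype n] [DecidableEq n]
    {M N : Matrix n n ℂ} (hM : M.PosSemidef) (hN : N.PosSemidef) :
    0 ≤ (M * N).trace := by
  have h2 : (M * N).trace = ((CFC.sqrt N) * M * (CFC.sqrt N)).trace := by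
    calc (M * N).trace = (M * (CFC.sqrt N) * (CFC.sqrt N)).trace := by
          rw [Matrix.mul_assoc, CFC.sqrt_mul_sqrt_self N hN.nonneg]
      _ = ((CFC.sqrt N) * M * (CFC.sqrt N)).trace := by rw [Matrix.trace_mul_cycle]
  rw [h2]
  have h3 : ((CFC.sqrt N) * M * (CFC.sqrt N)ᴴ).PosSemidef := hM.mul_mul_conjTranspose_same _
  rw [(CFC.sqrt_nonneg N).posSemidef.isHermitian.eq] at h3
  exact psd_trace_nonneg h3

lemma key_trace {ι : Type*} [Fintype ι] [DecidableEq ι]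
    (Λ : Matrix ι ι ℂ →ₗ[ℂ] Matrix ι ι ℂ) (A B : Matrix ι ι ℂ) :
    (oneTensor Λ (phiPlus ι) * (A ⊗ₖ B)).trace =
      ((1 : ℂ) / (Fintype.card ι : ℂ)) * ((Λ Aᵀ) * B).trace := by
  set d : ℂ := (Fintype.card ι : ℂ)
  have hW : ∀ p q : ι × ι, oneTensor Λ (phiPlus ι) p q
      = (1/d) * (Λ (single p.1 q.1 1)) p.2 q.2 := by
    intro p q
    have hslice : (fun a b => phiPlus ι (p.1, a) (q.1, b))
        = (1/d) • single p.1 q.1 (1 : ℂ) := by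
      funext a b
      simp [phiPlus, single, Matrix.smul_apply, smul_ite, smul_eq_mul, d]
    show (Λ (fun a b => phiPlus ι (p.1, a) (q.1, b))) p.2 q.2 = _
    rw [hslice, LinearMap.map_smul, Matrix.smul_apply, smul_eq_mul]
  have hA : Λ Aᵀ = ∑ i, ∑ j, A j i • Λ (single i j 1) := by
    conv_lhs => rw [matrix_eq_sum_single Aᵀ]
    rw [map_sum]
    refine Finset.sum_congr rfl fun i _ => ?_
    rw [map_sum]
    refine Finset.sum_congr rfl fun j _ => ?_
    rw [Matrix.transpose_apply,
      show single i j (A j i) = A j i • single i j (1 : ℂ) by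
        rw [smul_single, smul_eq_mul, mul_one],
      LinearMap.map_smul]
  have reorder : ∀ f : ι → ι → ι → ι → ℂ,
      (∑ a, ∑ b, ∑ i, ∑ j, f i a j b) = ∑ i, ∑ a, ∑ j, ∑ b, f i a j b := by
    intro f
    calc (∑ a, ∑ b, ∑ i, ∑ j, f i a j b)
        = ∑ a, ∑ i, ∑ b, ∑ j, f i a j b :=
          Finset.sum_congr rfl fun a _ => Finset.sum_comm
      _ = ∑ i, ∑ a, ∑ b, ∑ j, f i a j b := Finset.sum_comm
      _ = ∑ i, ∑ a, ∑ j, ∑ b, f i a j b :=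
          Finset.sum_congr rfl fun i _ => Finset.sum_congr rfl fun a _ => Finset.sum_comm
  rw [Matrix.trace, Matrix.trace]
  simp only [Matrix.diag, Matrix.mul_apply, Fintype.sum_prod_type, hW,
    Matrix.kroneckerMap_apply, hA, Matrix.sum_apply, Matrix.smul_apply, smul_eq_mul,
    Finset.mul_sum, Finset.sum_mul]
  conv_rhs => rw [reorder]
  refine Finset.sum_congr rfl fun i _ => Finset.sum_congr rfl fun a _ =>
    Finset.sum_congr rfl fun j _ => Finset.sum_congr rfl fun b _ => ?_
  ring

/-- Positive maps applied to the maximally entangled state yield entanglement witnesses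
(the nonnegativity half of Eq. (16)). -/
theorem positive_map_phiPlus_is_witness
    {ι : Type*} [Fintype ι] [DecidableEq ι] [Nonempty ι]
    (Λ : Matrix ι ι ℂ →ₗ[ℂ] Matrix ι ι ℂ)
    (hΛ : ∀ A : Matrix ι ι ℂ, A.PosSemidef → (Λ A).PosSemidef) :
    (∀ A B : Matrix ι ι ℂ, A.PosSemidef → B.PosSemidef →
      (oneTensor Λ (phiPlus ι) * (A ⊗ₖ B)).trace =
        ((1 : ℂ) / (Fintype.card ι : ℂ)) * ((Λ Aᵀ) * B).trace ∧
      0 ≤ ((oneTensor Λ (phiPlus ι) * (A ⊗ₖ B)).trace).re ∧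
      ((oneTensor Λ (phiPlus ι) * (A ⊗ₖ B)).trace).im = 0) ∧
    (∀ σ : Matrix (ι × ι) (ι × ι) ℂ, SeparableState σ →
      0 ≤ ((oneTensor Λ (phiPlus ι) * σ).trace).re) := by
  have main : ∀ A B : Matrix ι ι ℂ, A.PosSemidef → B.PosSemidef →
      (oneTensor Λ (phiPlus ι) * (A ⊗ₖ B)).trace =
        ((1 : ℂ) / (Fintype.card ι : ℂ)) * ((Λ Aᵀ) * B).trace ∧
      0 ≤ ((oneTensor Λ (phiPlus ι) * (A ⊗ₖ B)).trace).re ∧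
      ((oneTensor Λ (phiPlus ι) * (A ⊗ₖ B)).trace).im = 0 := by
    intro A B hA hB
    have heq := key_trace Λ A B
    have ht : 0 ≤ ((Λ Aᵀ) * B).trace :=
      psd_trace_mul_nonneg (hΛ _ hA.transpose) hB
    have hd : (0 : ℂ) ≤ (1 : ℂ) / (Fintype.card ι : ℂ) := by
      have h1 : (((1 : ℝ) / (Fintype.card ι : ℝ) : ℝ) : ℂ)
          = (1 : ℂ) / (Fintype.card ι : ℂ) := by push_cast; ring
      rw [← h1, Complex.zero_le_real]
      positivity
    have hnn : 0 ≤ (oneTensor Λ (phiPlus ι) * (A ⊗ₖ B)).trace := by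
      rw [heq]; exact mul_nonneg hd ht
    exact ⟨heq, (Complex.le_def.mp hnn).1, ((Complex.le_def.mp hnn).2).symm⟩
  refine ⟨main, ?_⟩
  rintro σ ⟨n, A, B, hA, hB, rfl⟩
  rw [Finset.mul_sum, Matrix.trace_sum]
  rw [Complex.re_sum]
  exact Finset.sum_nonneg fun k _ => (main (A k) (B k) (hA k) (hB k)).2.1
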